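/- arXiv:1411.6371 — 4 statements merged into one kernel-verified Lean document; each statement's English description precedes it below -/
import Mathlib

section
/- For any n ≥ 1 and any mountain-valley string s ∈ {M,V}^n, a paper strip with n equally spaced creases admits a valid flat folded state consistent with s. (Proof idea: repeatedly fold at the rightmost crease.) -/
/-- Two pairs of levels are nested or disjoint (the noncrossing condition). -/
def nestedOrDisjoint {α : Type*} [LinearOrder α] (a b u v : α) : Prop :=
  max a b < min u v ∨ max u v < min a b ∨
    (min a b ≤ min u v ∧ max u v ≤ max a b) ∨ (min u v ≤ min a b ∧ max a b ≤ max u v)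

/-- A valid flat folded state of a strip with `n` equally spaced creases and
mountain-valley string `s : Fin n → Bool` (`true` = valley, `false` = mountain):
a stacking order, i.e. a bijective assignment `π` of the `n + 1` unit segments to
levels.  Crease `i` joins segments `i` and `i + 1`; segment `i` travels rightward
(top side up) iff `i` is even, so a valley there puts segment `i+1` directly above
segment `i` in orientation, giving the recorded order condition.  Crease `i` folds
at the right end iff `i` is even, so two creases with indices of equal parity lie
on the same side, and their pairs of segments must not interleave in the stacking
order, i.e. must be nested or disjoint. -/
def ValidStack (n : ℕ) (s : Fin n → Bool) (π : Fin (n + 1) → Fin (n + 1)) : Prop :=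
  Function.Bijective π ∧
  (∀ i : Fin n, (π i.castSucc < π i.succ ↔ s i = decide (Even (i : ℕ)))) ∧
  (∀ i j : Fin n, i ≠ j → (i : ℕ) % 2 = (j : ℕ) % 2 →
    nestedOrDisjoint (π i.castSucc) (π i.succ) (π j.castSucc) (π j.succ))

lemma nod_symm {α : Type*} [LinearOrder α] {a b u v : α} (h : nestedOrDisjoint a b u v) :
    nestedOrDisjoint u v a b := by
  unfold nestedOrDisjoint at *; tauto

lemma nod_map_iff {α β : Type*} [LinearOrder α] [LinearOrder β] {f : α → β}
    (hf : StrictMono f) (a b u v : α) :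
    nestedOrDisjoint (f a) (f b) (f u) (f v) ↔ nestedOrDisjoint a b u v := by
  have hmin : ∀ x y : α, min (f x) (f y) = f (min x y) := fun x y =>
    (hf.monotone.map_min).symm
  have hmax : ∀ x y : α, max (f x) (f y) = f (max x y) := fun x y =>
    (hf.monotone.map_max).symm
  unfold nestedOrDisjoint
  rw [hmin, hmin, hmax, hmax, hf.lt_iff_lt, hf.lt_iff_lt, hf.le_iff_le, hf.le_iff_le,
    hf.le_iff_le, hf.le_iff_le]

lemma nod_adj {x y u v : ℕ} (hxy : x = y + 1 ∨ y = x + 1)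
    (hu1 : u ≠ x) (hu2 : u ≠ y) (hv1 : v ≠ x) (hv2 : v ≠ y) :
    nestedOrDisjoint x y u v := by
  unfold nestedOrDisjoint; omega

/-- The inductive step: given a valid stack for the first `n` creases, fold at the
rightmost crease, inserting the new segment at level `new` directly adjacent to the
level of segment `n`. -/
lemma step_aux (n : ℕ) (s : Fin (n + 1) → Bool) (π : Fin (n + 1) → Fin (n + 1))
    (h : ValidStack n (fun j => s j.castSucc) π) (new : Fin (n + 2))
    (hord : new.succAbove (π (Fin.last n)) < new ↔ s (Fin.last n) = decide (Even n))
    (hadj : ((new.succAbove (π (Fin.last n)) : ℕ) = (new : ℕ) + 1) ∨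
      ((new : ℕ) = (new.succAbove (π (Fin.last n)) : ℕ) + 1)) :
    ValidStack (n + 1) s (Fin.snoc (fun i => new.succAbove (π i)) new) := by
  obtain ⟨hbij, h2, h3⟩ := h
  set π' : Fin (n + 2) → Fin (n + 2) := Fin.snoc (fun i => new.succAbove (π i)) new with hπ'
  have he : StrictMono new.succAbove := Fin.strictMono_succAbove new
  have hcs : ∀ x : Fin (n + 1), π' x.castSucc = new.succAbove (π x) := by
    intro x; simp [hπ']
  have hlastv : π' (Fin.last (n + 1)) = new := by simp [hπ']
  -- injectivity
  have hinj : Function.Injective π' := by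
    intro x y hxy
    induction x using Fin.lastCases with
    | last =>
      induction y using Fin.lastCases with
      | last => rfl
      | cast c =>
        rw [hlastv, hcs] at hxy
        exact absurd hxy.symm (Fin.succAbove_ne _ _)
    | cast c =>
      induction y using Fin.lastCases with
      | last =>
        rw [hlastv, hcs] at hxy
        exact absurd hxy (Fin.succAbove_ne _ _)
      | cast d =>
        rw [hcs, hcs] at hxy
        exact congrArg Fin.castSucc (hbij.1 (Fin.succAbove_right_injective hxy))
  refine ⟨Finite.injective_iff_bijective.mp hinj, ?_, ?_⟩
  · -- order condition
    intro i
    induction i using Fin.lastCases with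
    | last =>
      rw [Fin.succ_last, hcs, hlastv]
      simpa using hord
    | cast k =>
      rw [Fin.succ_castSucc, hcs, hcs, he.lt_iff_lt]
      simpa using h2 k
  · -- noncrossing
    have hlastpair : ∀ k : Fin n, (k : ℕ) % 2 = n % 2 →
        nestedOrDisjoint (π' (Fin.last n).castSucc) (π' (Fin.last n).succ)
          (π' (Fin.castSucc k).castSucc) (π' (Fin.castSucc k).succ) := by
      intro k hk
      rw [Fin.succ_last, hcs, hlastv, Fin.succ_castSucc, hcs, hcs]
      rw [← nod_map_iff Fin.val_strictMono]
      have hne1 : π k.castSucc ≠ π (Fin.last n) :=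
        fun hh => (Fin.castSucc_lt_last k).ne (hbij.1 hh)
      have hne2 : π k.succ ≠ π (Fin.last n) := by
        intro hh
        have : (k.succ : Fin (n + 1)) = Fin.last n := hbij.1 hh
        have : (k : ℕ) + 1 = n := by
          have := congrArg Fin.val this
          simpa using this
        omega
      refine nod_adj hadj ?_ ?_ ?_ ?_
      · exact fun hh => hne1 (Fin.succAbove_right_injective (Fin.val_injective hh))
      · exact fun hh => Fin.succAbove_ne new (π k.castSucc) (Fin.val_injective hh)
      · exact fun hh => hne2 (Fin.succAbove_right_injective (Fin.val_injective hh))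
      · exact fun hh => Fin.succAbove_ne new (π k.succ) (Fin.val_injective hh)
    intro i j
    induction i using Fin.lastCases with
    | last =>
      induction j using Fin.lastCases with
      | last => exact fun hij _ => absurd rfl hij
      | cast k =>
        intro _ hpar
        refine hlastpair k ?_
        simpa using hpar.symm
    | cast k =>
      induction j using Fin.lastCases with
      | last =>
        intro _ hpar
        refine nod_symm (hlastpair k ?_)
        simpa using hpar
      | cast l =>
        intro hij hpar
        rw [Fin.succ_castSucc, Fin.succ_castSucc, hcs, hcs, hcs, hcs, nod_map_iff he]
        refine h3 k l (fun hh => hij (congrArg Fin.castSucc hh)) ?_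
        simpa using hpar

lemma exists_validStack : ∀ (n : ℕ) (s : Fin n → Bool), ∃ π, ValidStack n s π := by
  intro n
  induction n with
  | zero =>
    intro s
    exact ⟨id, Function.bijective_id, fun i => i.elim0, fun i => i.elim0⟩
  | succ n ih =>
    intro s
    obtain ⟨π, hπ⟩ := ih (fun j => s j.castSucc)
    set a : Fin (n + 1) := π (Fin.last n) with ha
    by_cases hc : s (Fin.last n) = decide (Even n)
    · refine ⟨_, step_aux n s π hπ a.succ ?_ ?_⟩
      · rw [← ha, Fin.succAbove_succ_self]
        exact iff_of_true (Fin.castSucc_lt_succ (i := a)) hc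
      · rw [← ha, Fin.succAbove_succ_self]
        right; simp
    · refine ⟨_, step_aux n s π hπ a.castSucc ?_ ?_⟩
      · rw [← ha, Fin.succAbove_castSucc_self]
        exact iff_of_false (fun hh => absurd (hh.trans (Fin.castSucc_lt_succ (i := a))) (lt_irrefl _)) hc
      · rw [← ha, Fin.succAbove_castSucc_self]
        left; simp

/-- For any `n ≥ 1` and any mountain-valley string `s ∈ {M,V}ⁿ`, a paper strip with
`n` equally spaced creases admits a valid flat folded state consistent with `s`. -/
theorem stmt_1 (n : ℕ) (hn : 1 ≤ n) (s : Fin n → Bool) :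
    ∃ π : Fin (n + 1) → Fin (n + 1), ValidStack n s π :=
  exists_validStack n s
end

section
/- Let n ≥ 1 and consider a strip with 2n creases and mountain-valley string M^n V^n, where all interior segments S_1,…,S_{2n-1} have equal length ℓ and the two end segments S_0, S_{2n} have equal length L > ℓ. Then the flat folded state is unique up to reversal of the entire stacking order, and its stacking order from one side is S_0, S_{2n-1}, S_2, S_{2n-3}, …, S_{2i}, S_{2(n-i)-1}, …, S_1, S_{2n}. -/
open Finset

/-- Folded image of crease point `pᵢ` (at coordinate `x i`), for the determined
piecewise isometry that starts rightward and reverses direction at each crease. -/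
def foldedPos (n : ℕ) (x : Fin (n + 2) → ℝ) (i : Fin (n + 2)) : ℝ :=
  ∑ j : Fin (n + 1),
    if (j : ℕ) < (i : ℕ) then (-1 : ℝ) ^ (j : ℕ) * (x j.succ - x j.castSucc) else 0

/-- Endpoints of the folded image of segment `Sᵢ`. -/
def segLo (n : ℕ) (x : Fin (n + 2) → ℝ) (i : Fin (n + 1)) : ℝ :=
  min (foldedPos n x i.castSucc) (foldedPos n x i.succ)

def segHi (n : ℕ) (x : Fin (n + 2) → ℝ) (i : Fin (n + 1)) : ℝ :=
  max (foldedPos n x i.castSucc) (foldedPos n x i.succ)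

/-- Folded image of crease `i` (the crease at `x (i+1)`, joining segments `i`, `i+1`). -/
def creasePt (n : ℕ) (x : Fin (n + 2) → ℝ) (i : Fin n) : ℝ :=
  foldedPos n x i.succ.castSucc

/-- The folded images of two segments overlap in an open interval. -/
def SegOverlap (n : ℕ) (x : Fin (n + 2) → ℝ) (i j : Fin (n + 1)) : Prop :=
  max (segLo n x i) (segLo n x j) < min (segHi n x i) (segHi n x j)

/-- A valid leveled folded state: overlapping segments get distinct levels; at each
crease the mountain/valley letter (`true` = valley) dictates the relative order of the
two joined segments (segment `i` travels rightward with top side up iff `i` is even);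
no segment properly crossing a crease point lies strictly between the two segments
joined there; and two creases folded at the same point with all four segments
extending to the same side have nested-or-disjoint level pairs. -/
def ValidLeveled (n : ℕ) (x : Fin (n + 2) → ℝ) (s : Fin n → Bool)
    (lev : Fin (n + 1) → ℤ) : Prop :=
  (∀ i j : Fin (n + 1), i ≠ j → SegOverlap n x i j → lev i ≠ lev j) ∧
  (∀ i : Fin n, (lev i.castSucc < lev i.succ ↔ s i = decide (Even (i : ℕ)))) ∧
  (∀ (i : Fin n) (j : Fin (n + 1)), segLo n x j < creasePt n x i →
      creasePt n x i < segHi n x j →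
      ¬ (min (lev i.castSucc) (lev i.succ) < lev j ∧
         lev j < max (lev i.castSucc) (lev i.succ))) ∧
  (∀ i i' : Fin n, i ≠ i' → creasePt n x i = creasePt n x i' →
      ((foldedPos n x i.castSucc.castSucc < creasePt n x i) ↔
        (foldedPos n x i'.castSucc.castSucc < creasePt n x i')) →
      nestedOrDisjoint (lev i.castSucc) (lev i.succ) (lev i'.castSucc) (lev i'.succ))

namespace Stmt6Aux

lemma nod_of_sum_eq {a b u v : ℤ} (h : a + b = u + v) : nestedOrDisjoint a b u v := by
  have h1 := min_add_max a b
  have h2 := min_add_max u v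
  rcases le_total (min a b) (min u v) with h3 | h3
  · exact Or.inr (Or.inr (Or.inl ⟨h3, by omega⟩))
  · exact Or.inr (Or.inr (Or.inr ⟨h3, by omega⟩))

lemma nod_neg {a b u v : ℤ} (h : nestedOrDisjoint a b u v) :
    nestedOrDisjoint (-a) (-b) (-u) (-v) := by
  unfold nestedOrDisjoint at h ⊢
  simp only [min_neg_neg, max_neg_neg]
  omega

def rho (n k : ℕ) : ℕ := if Even k then k else 2 * n - k

/-- Abstract constraint system extracted from `ValidLeveled` for the strip `MⁿVⁿ`. -/
def Sys (n : ℕ) (a : ℕ → ℤ) : Prop :=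
  (∀ i j, i ≤ 2 * n → j ≤ 2 * n → i ≠ j → a i ≠ a j) ∧
  (∀ i, i < 2 * n → (a i < a (i + 1) ↔ ((n ≤ i) ↔ Even i))) ∧
  (∀ m m', m < n → m' < n → m ≠ m' →
      nestedOrDisjoint (a (2 * m)) (a (2 * m + 1)) (a (2 * m')) (a (2 * m' + 1))) ∧
  (∀ m m', m < n → m' < n → m ≠ m' →
      nestedOrDisjoint (a (2 * m + 1)) (a (2 * m + 2)) (a (2 * m' + 1)) (a (2 * m' + 2))) ∧
  (∀ m, m < n →
      ¬ (min (a (2 * m + 1)) (a (2 * m + 2)) < a 0 ∧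
         a 0 < max (a (2 * m + 1)) (a (2 * m + 2)))) ∧
  (∀ m, m < n →
      ¬ (min (a (2 * m)) (a (2 * m + 1)) < a (2 * n) ∧
         a (2 * n) < max (a (2 * m)) (a (2 * m + 1))))

lemma sys_max {n : ℕ} {a : ℕ → ℤ} (hs : Sys n a) (hn : 1 ≤ n) :
    ∀ i, 1 ≤ i → i ≤ 2 * n → a i < a 0 := by
  obtain ⟨inj, cr, _hP, _hQ, eQ, eP⟩ := hs
  by_contra hcon
  push_neg at hcon
  obtain ⟨i0, hi1, hi2, hi3⟩ := hcon
  have hPred : ∃ k, k ≤ 2 * n ∧ a 0 < a k := by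
    refine ⟨i0, hi2, lt_of_le_of_ne hi3 ?_⟩
    exact (inj 0 i0 (by omega) hi2 (by omega))
  classical
  obtain ⟨p, ⟨hpB, hpV⟩, hmin⟩ : ∃ p, (p ≤ 2 * n ∧ a 0 < a p) ∧
      ∀ k < p, ¬ (k ≤ 2 * n ∧ a 0 < a k) :=
    ⟨Nat.find hPred, Nat.find_spec hPred, fun k hk => Nat.find_min hPred hk⟩
  have hp2 : 2 ≤ p := by
    by_contra h
    have h0 : a 0 < a 1 → False := by
      intro h1
      have := (cr 0 (by omega)).mp h1
      simp at this; omega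
    interval_cases p
    · exact absurd hpV (lt_irrefl _)
    · exact h0 hpV
  obtain ⟨e, hep⟩ : ∃ e, e + 1 = p := ⟨p - 1, by omega⟩
  have haeB : e ≤ 2 * n := by omega
  have hae : a e < a 0 := by
    have h1 : ¬ (e ≤ 2 * n ∧ a 0 < a e) := hmin e (by omega)
    have h2 : a e ≠ a 0 := inj e 0 haeB (by omega) (by omega)
    omega
  rcases Nat.even_or_odd e with heE | heO
  · -- e even
    rcases Nat.lt_or_ge e n with hen | hen
    · -- e even, e < n : crease e says a e > a (e+1)
      have h1 := cr e (by omega)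
      rw [hep] at h1
      have h2 : ((n ≤ e) ↔ Even e) := h1.mp (by omega)
      rw [Nat.even_iff] at heE h2
      omega
    · -- e even, e ≥ n : the chain argument
      have claim1 : ∀ i, p ≤ i → i ≤ 2 * n → a 0 < a i := by
        intro i hpi hiB
        induction i with
        | zero => omega
        | succ i ih =>
          rcases Nat.lt_or_ge i p with h | h
          · have : i + 1 = p := by omega
            rw [this]; exact hpV
          · have hai : a 0 < a i := ih h (by omega)
            by_contra hcon2
            have hlt : a (i + 1) < a 0 := by
              have : a (i + 1) ≠ a 0 := inj (i+1) 0 (by omega) (by omega) (by omega)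
              omega
            rcases Nat.even_or_odd i with hiE | hiO
            · -- i even, i ≥ p > e ≥ n : crease i says a i < a (i+1)
              have h1 := (cr i (by omega)).mpr
                (by rw [Nat.even_iff] at hiE ⊢; omega)
              omega
            · -- i odd : Q-pair straddles a 0
              obtain ⟨m, hm⟩ := hiO
              have hmn : m < n := by omega
              have hq := eQ m hmn
              have e1 : 2 * m + 1 = i := by omega
              have e2 : 2 * m + 2 = i + 1 := by omega
              rw [e1, e2] at hq
              have := min_le_right (a i) (a (i+1))
              have := le_max_left (a i) (a (i+1))
              omega
      have h2n : a 0 < a (2 * n) := claim1 (2 * n) (by omega) le_rfl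
      obtain ⟨m0, hm0⟩ := heE
      have hm0e : e = 2 * m0 := by omega
      -- descending chain : for m0 ≤ m ≤ n - 1, a (2m+1) < a (2n)
      have base : ∀ m, m = m0 → a (2 * m + 1) < a (2 * n) := by
        intro m hm
        have heP := eP m (by omega)
        have h3 : a (2 * m) < a (2 * n) := by
          rw [hm, ← hm0e]; exact lt_trans hae h2n
        have h4 := min_le_left (a (2*m)) (a (2*m+1))
        have h5 := le_max_right (a (2*m)) (a (2*m+1))
        have h6 : a (2*m+1) ≠ a (2*n) := inj _ _ (by omega) (by omega) (by omega)
        omega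
      have claim2 : ∀ m, m0 ≤ m → m ≤ n - 1 → a (2 * m + 1) < a (2 * n) := by
        intro m h1 h2
        induction m with
        | zero => exact base 0 (by omega)
        | succ m ih =>
          rcases Nat.lt_or_ge m m0 with h | h
          · exact base (m+1) (by omega)
          · have hprev : a (2 * m + 1) < a (2 * n) := ih h (by omega)
            have hcr := cr (2*m+1) (by omega)
            have h7 : ¬ ((n ≤ 2*m+1) ↔ Even (2*m+1)) := by
              rw [Nat.even_iff]; omega
            have hnlt : ¬ a (2*m+1) < a (2*m+1+1) := fun hlt => h7 (hcr.mp hlt)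
            have hatom : a (2*m+1+1) = a (2*m+2) := congrArg a (by omega)
            have h8 : a (2*m+2) < a (2*m+1) := by
              have h9 : a (2*m+1) ≠ a (2*m+1+1) := inj _ _ (by omega) (by omega) (by omega)
              omega
            have heP := eP (m+1) (by omega)
            have h3 : a (2 * (m+1)) < a (2*n) := by
              have he' : 2 * (m+1) = 2*m+2 := by ring
              rw [he']; omega
            have h4 := min_le_left (a (2*(m+1))) (a (2*(m+1)+1))
            have h5 := le_max_right (a (2*(m+1))) (a (2*(m+1)+1))
            have h6 : a (2*(m+1)+1) ≠ a (2*n) := inj _ _ (by omega) (by omega) (by omega)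
            omega
      have hfin : a (2 * (n-1) + 1) < a (2 * n) := claim2 (n-1) (by omega) le_rfl
      have hcr := cr (2*(n-1)+1) (by omega)
      have h7 : ¬ ((n ≤ 2*(n-1)+1) ↔ Even (2*(n-1)+1)) := by
        rw [Nat.even_iff]; omega
      have h8 : 2*(n-1)+1+1 = 2*n := by omega
      rw [h8] at hcr
      exact (fun hlt => h7 (hcr.mp hlt)) hfin
  · -- e odd : Q-pair straddles a 0
    obtain ⟨m, hm⟩ := heO
    have hmn : m < n := by omega
    have hq := eQ m hmn
    have e1 : 2 * m + 1 = e := by omega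
    have e2 : 2 * m + 2 = p := by omega
    rw [e1, e2] at hq
    have := min_le_left (a e) (a p)
    have := le_max_right (a e) (a p)
    omega

end Stmt6Aux

namespace Stmt6Aux

lemma nod_swap {a b u v : ℤ} (h : nestedOrDisjoint a b u v) : nestedOrDisjoint b a v u := by
  unfold nestedOrDisjoint at h ⊢
  rwa [min_comm b a, max_comm b a, min_comm v u, max_comm v u]

lemma rho_spec (n k : ℕ) : (k % 2 = 0 ∧ rho n k = k) ∨ (k % 2 = 1 ∧ rho n k = 2 * n - k) := by
  by_cases h : Even k
  · exact Or.inl ⟨Nat.even_iff.mp h, if_pos h⟩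
  · exact Or.inr ⟨Nat.odd_iff.mp (Nat.not_even_iff_odd.mp h), if_neg h⟩

lemma sys_reflect {n : ℕ} {a : ℕ → ℤ} (hs : Sys n a) : Sys n (fun j => -a (2 * n - j)) := by
  obtain ⟨inj, cr, hP, hQ, eQ, eP⟩ := hs
  refine ⟨?_, ?_, ?_, ?_, ?_, ?_⟩
  · intro i j hi hj hne h
    have := inj (2*n-i) (2*n-j) (by omega) (by omega) (by omega)
    simp only at h
    omega
  · intro i hi
    simp only
    rw [neg_lt_neg_iff]
    have e1 : a (2*n - i) = a (2*n - (i+1) + 1) := congrArg a (by omega)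
    rw [e1, cr (2*n - (i+1)) (by omega)]
    simp only [Nat.even_iff]
    omega
  · intro m m' hm hm' hne
    simp only
    have h := nod_swap (nod_neg (hQ (n-1-m) (n-1-m') (by omega) (by omega) (by omega)))
    rw [show a (2*(n-1-m)+1) = a (2*n - (2*m+1)) from congrArg a (by omega),
        show a (2*(n-1-m)+2) = a (2*n - 2*m) from congrArg a (by omega),
        show a (2*(n-1-m')+1) = a (2*n - (2*m'+1)) from congrArg a (by omega),
        show a (2*(n-1-m')+2) = a (2*n - 2*m') from congrArg a (by omega)] at h
    exact h
  · intro m m' hm hm' hne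
    simp only
    have h := nod_swap (nod_neg (hP (n-1-m) (n-1-m') (by omega) (by omega) (by omega)))
    rw [show a (2*(n-1-m)+1) = a (2*n - (2*m+1)) from congrArg a (by omega),
        show a (2*(n-1-m)) = a (2*n - (2*m+2)) from congrArg a (by omega),
        show a (2*(n-1-m')+1) = a (2*n - (2*m'+1)) from congrArg a (by omega),
        show a (2*(n-1-m')) = a (2*n - (2*m'+2)) from congrArg a (by omega)] at h
    exact h
  · intro m hm
    have hps := eP (n-1-m) (by omega)
    simp only
    rw [show a (2*n - 0) = a (2*n) from congrArg a (by omega),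
        show a (2*n - (2*m+1)) = a (2*(n-1-m)+1) from congrArg a (by omega),
        show a (2*n - (2*m+2)) = a (2*(n-1-m)) from congrArg a (by omega)]
    rw [min_comm (-a (2*(n-1-m)+1)) (-a (2*(n-1-m))),
        max_comm (-a (2*(n-1-m)+1)) (-a (2*(n-1-m))),
        min_neg_neg, max_neg_neg]
    omega
  · intro m hm
    have hqs := eQ (n-1-m) (by omega)
    simp only
    rw [show a (2*n - 2*n) = a 0 from congrArg a (by omega),
        show a (2*n - 2*m) = a (2*(n-1-m)+2) from congrArg a (by omega),
        show a (2*n - (2*m+1)) = a (2*(n-1-m)+1) from congrArg a (by omega)]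
    rw [min_comm (-a (2*(n-1-m)+2)) (-a (2*(n-1-m)+1)),
        max_comm (-a (2*(n-1-m)+2)) (-a (2*(n-1-m)+1)),
        min_neg_neg, max_neg_neg]
    omega

lemma sys_min {n : ℕ} {a : ℕ → ℤ} (hs : Sys n a) (hn : 1 ≤ n) :
    ∀ j, j < 2 * n → a (2 * n) < a j := by
  intro j hj
  have h := sys_max (sys_reflect hs) hn (2*n - j) (by omega) (by omega)
  rw [show 2*n - (2*n - j) = j from by omega, show 2*n - 0 = 2*n from by omega] at h
  omega

lemma sys_step {n : ℕ} {a : ℕ → ℤ} (hs : Sys (n + 1) a) :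
    Sys n (fun j => -a (j + 1)) := by
  have hmax := sys_max hs (by omega)
  have hmin := sys_min hs (by omega)
  obtain ⟨inj, cr, hP, hQ, eQ, eP⟩ := hs
  refine ⟨?_, ?_, ?_, ?_, ?_, ?_⟩
  · intro i j hi hj hne h
    have := inj (i+1) (j+1) (by omega) (by omega) (by omega)
    simp only at h
    omega
  · intro i hi
    simp only
    rw [neg_lt_neg_iff]
    have hcr := cr (i+1) (by omega)
    have hne : a (i+1) ≠ a (i+1+1) := inj _ _ (by omega) (by omega) (by omega)
    rw [Nat.even_iff] at hcr
    rw [Nat.even_iff]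
    omega
  · intro m m' hm hm' hne
    simp only
    rw [show a (2*m+1+1) = a (2*m+2) from congrArg a (by omega),
        show a (2*m'+1+1) = a (2*m'+2) from congrArg a (by omega)]
    exact nod_neg (hQ m m' (by omega) (by omega) hne)
  · intro m m' hm hm' hne
    simp only
    rw [show a (2*m+1+1) = a (2*(m+1)) from congrArg a (by omega),
        show a (2*m+2+1) = a (2*(m+1)+1) from congrArg a (by omega),
        show a (2*m'+1+1) = a (2*(m'+1)) from congrArg a (by omega),
        show a (2*m'+2+1) = a (2*(m'+1)+1) from congrArg a (by omega)]
    exact nod_neg (hP (m+1) (m'+1) (by omega) (by omega) (by omega))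
  · intro m hm
    simp only
    rw [show a (2*m+1+1) = a (2*(m+1)) from congrArg a (by omega),
        show a (2*m+2+1) = a (2*(m+1)+1) from congrArg a (by omega),
        show a (0+1) = a 1 from rfl, min_neg_neg, max_neg_neg]
    have hnod := hP 0 (m+1) (by omega) (by omega) (by omega)
    rw [show 2*0 = 0 from rfl, show 2*0+1 = 1 from rfl] at hnod
    have h1 : a 1 < a 0 := hmax 1 (by omega) (by omega)
    have h2 : a (2*(m+1)) < a 0 := hmax _ (by omega) (by omega)
    have h3 : a (2*(m+1)+1) < a 0 := hmax _ (by omega) (by omega)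
    have := min_le_left (a 0) (a 1)
    have := min_le_right (a 0) (a 1)
    have := le_max_left (a 0) (a 1)
    have := le_max_right (a 0) (a 1)
    have := min_choice (a 0) (a 1)
    have := max_choice (a 0) (a 1)
    have := min_le_left (a (2*(m+1))) (a (2*(m+1)+1))
    have := min_le_right (a (2*(m+1))) (a (2*(m+1)+1))
    have := le_max_left (a (2*(m+1))) (a (2*(m+1)+1))
    have := le_max_right (a (2*(m+1))) (a (2*(m+1)+1))
    have := min_choice (a (2*(m+1))) (a (2*(m+1)+1))
    have := max_choice (a (2*(m+1))) (a (2*(m+1)+1))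
    unfold nestedOrDisjoint at hnod
    omega
  · intro m hm
    simp only
    rw [show a (2*m+1+1) = a (2*m+2) from congrArg a (by omega),
        min_neg_neg, max_neg_neg]
    have hnod := hQ m n (by omega) (by omega) (by omega)
    have h0 : a (2*(n+1)) < a (2*n+1) := hmin _ (by omega)
    have h0' : a (2*n+2) = a (2*(n+1)) := congrArg a (by omega)
    have h2 : a (2*(n+1)) < a (2*m+1) := hmin _ (by omega)
    have h3 : a (2*(n+1)) < a (2*m+2) := hmin _ (by omega)
    have := min_le_left (a (2*n+1)) (a (2*n+2))
    have := min_le_right (a (2*n+1)) (a (2*n+2))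
    have := le_max_left (a (2*n+1)) (a (2*n+2))
    have := le_max_right (a (2*n+1)) (a (2*n+2))
    have := min_choice (a (2*n+1)) (a (2*n+2))
    have := max_choice (a (2*n+1)) (a (2*n+2))
    have := min_le_left (a (2*m+1)) (a (2*m+2))
    have := min_le_right (a (2*m+1)) (a (2*m+2))
    have := le_max_left (a (2*m+1)) (a (2*m+2))
    have := le_max_right (a (2*m+1)) (a (2*m+2))
    have := min_choice (a (2*m+1)) (a (2*m+2))
    have := max_choice (a (2*m+1)) (a (2*m+2))
    unfold nestedOrDisjoint at hnod
    omega

lemma sys_main : ∀ (n : ℕ) (a : ℕ → ℤ), Sys n a →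
    ∀ i, i ≤ 2 * n → ∀ j, j ≤ 2 * n → (a i < a j ↔ rho n j < rho n i) := by
  intro n
  induction n with
  | zero =>
    intro a _ i hi j hj
    have h1 : i = 0 := by omega
    have h2 : j = 0 := by omega
    subst h1; subst h2
    simp
  | succ n ih =>
    intro a hs i hi j hj
    have hmax := sys_max hs (by omega)
    have hmin := sys_min hs (by omega)
    have inj := hs.1
    have ri := rho_spec (n+1) i
    have rj := rho_spec (n+1) j
    by_cases hij : i = j
    · subst hij; simp
    by_cases hi0 : i = 0
    · subst hi0
      have h1 := hmax j (by omega) hj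
      omega
    by_cases hj0 : j = 0
    · subst hj0
      have h1 := hmax i (by omega) hi
      omega
    by_cases hi2 : i = 2*(n+1)
    · subst hi2
      have h1 := hmin j (by omega)
      omega
    by_cases hj2 : j = 2*(n+1)
    · subst hj2
      have h1 := hmin i (by omega)
      omega
    · have hstep := sys_step hs
      have hIH := ih _ hstep (j-1) (by omega) (i-1) (by omega)
      rw [show j-1+1 = j from by omega, show i-1+1 = i from by omega] at hIH
      have ri' := rho_spec n (i-1)
      have rj' := rho_spec n (j-1)
      omega

end Stmt6Aux


namespace Stmt6Aux

lemma foldedPos_zero (N : ℕ) (x : Fin (N+2) → ℝ) (h : (0:ℕ) < N + 2) :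
    foldedPos N x ⟨0, h⟩ = 0 := by
  unfold foldedPos
  apply Finset.sum_eq_zero
  intro j _
  simp

lemma foldedPos_succ (N : ℕ) (x : Fin (N+2) → ℝ) (i : ℕ) (h : i < N+1) :
    foldedPos N x ⟨i+1, by omega⟩ =
      foldedPos N x ⟨i, by omega⟩ +
        (-1:ℝ)^i * (x (Fin.succ ⟨i, h⟩) - x (Fin.castSucc ⟨i, h⟩)) := by
  unfold foldedPos
  rw [show (((⟨i+1, by omega⟩ : Fin (N+2)) : ℕ)) = i + 1 from rfl]
  have key : ∀ j : Fin (N+1),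
      (if (j:ℕ) < i + 1 then (-1:ℝ)^(j:ℕ) * (x j.succ - x j.castSucc) else 0) =
      (if (j:ℕ) < i then (-1:ℝ)^(j:ℕ) * (x j.succ - x j.castSucc) else 0) +
      (if j = ⟨i, h⟩ then (-1:ℝ)^(j:ℕ) * (x j.succ - x j.castSucc) else 0) := by
    intro j
    by_cases h2 : j = ⟨i, h⟩
    · subst h2
      simp
    · have h3 : (j:ℕ) ≠ i := fun hc => h2 (Fin.ext hc)
      by_cases h1 : (j:ℕ) < i
      · rw [if_pos (by omega), if_pos h1, if_neg h2, add_zero]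
      · rw [if_neg (by omega), if_neg h1, if_neg h2, add_zero]
  rw [Finset.sum_congr rfl (fun j _ => key j), Finset.sum_add_distrib,
    Finset.sum_ite_eq' Finset.univ (⟨i, h⟩ : Fin (N+1))]
  simp

section Concrete

variable (n : ℕ) (L ℓ : ℝ)

def xfun : Fin (2*n+2) → ℝ := fun i =>
  if (i : ℕ) = 0 then 0
  else if (i : ℕ) = 2 * n + 1 then 2 * L + (2 * (n : ℝ) - 1) * ℓ
  else L + (((i : ℕ) : ℝ) - 1) * ℓ

def pv (i : ℕ) : ℝ :=
  if i = 0 then 0 else if i = 2*n+1 then 2*L - ℓ else if Even i then L - ℓ else L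

variable (hn : 1 ≤ n)

include hn in
lemma xfun_incr (i : ℕ) (h : i < 2*n+1) :
    xfun n L ℓ ⟨i+1, by omega⟩ - xfun n L ℓ ⟨i, by omega⟩ =
      if i = 0 then L else if i = 2*n then L else ℓ := by
  unfold xfun
  simp only
  by_cases h0 : i = 0
  · subst h0
    rw [if_neg (show ¬(0+1=0) by omega), if_neg (show ¬(0+1=2*n+1) by omega),
        if_pos rfl, if_pos rfl]
    norm_num
  · by_cases h1 : i = 2*n
    · subst h1
      rw [if_neg (show ¬(2*n+1=0) by omega), if_pos rfl, if_neg h0,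
          if_neg (show ¬(2*n = 2*n+1) by omega), if_neg h0, if_pos rfl]
      push_cast
      ring
    · rw [if_neg (show ¬(i+1=0) by omega), if_neg (show ¬(i+1=2*n+1) by omega),
          if_neg h0, if_neg (show ¬(i = 2*n+1) by omega), if_neg h0, if_neg h1]
      push_cast
      ring

variable (hl : 0 < ℓ) (hL : ℓ < L)

include hl hL in
lemma pv_le_L : ∀ k, k ≤ 2*n → pv n L ℓ k ≤ L := by
  intro k hk
  unfold pv
  split_ifs with h1 h2 h3
  · linarith
  · exact absurd h2 (by omega)
  · linarith
  · exact le_rfl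

include hl hL in
lemma pv_ge : ∀ k, 1 ≤ k → L - ℓ ≤ pv n L ℓ k := by
  intro k hk
  unfold pv
  split_ifs with h1 h2 h3
  · omega
  · linarith
  · linarith
  · linarith

lemma pv_zero : pv n L ℓ 0 = 0 := if_pos rfl

include hn in
lemma pv_one : pv n L ℓ 1 = L := by
  unfold pv
  rw [if_neg (by omega), if_neg (by omega), if_neg (by decide : ¬ Even 1)]

include hn in
lemma pv_top : pv n L ℓ (2*n+1) = 2*L - ℓ := by
  unfold pv
  rw [if_neg (by omega), if_pos rfl]

include hn in
lemma pv_even_eq : ∀ k, 1 ≤ k → k ≤ 2*n → Even k → pv n L ℓ k = L - ℓ := by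
  intro k h1 h2 h3
  unfold pv
  rw [if_neg (by omega), if_neg (by rw [Nat.even_iff] at h3; omega), if_pos h3]

include hn in
lemma pv_odd_eq : ∀ k, k ≤ 2*n → Odd k → pv n L ℓ k = L := by
  intro k h1 h3
  rw [Nat.odd_iff] at h3
  unfold pv
  rw [if_neg (by omega), if_neg (by omega), if_neg (by rw [Nat.even_iff]; omega)]

include hn in
lemma fp_val : ∀ i, ∀ h : i < 2*n+2,
    foldedPos (2*n) (xfun n L ℓ) ⟨i, h⟩ = pv n L ℓ i := by
  intro i
  induction i with
  | zero =>
    intro h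
    rw [foldedPos_zero]
    simp [pv]
  | succ i ih =>
    intro h
    have hi : i < 2*n+1 := by omega
    rw [foldedPos_succ (2*n) _ i hi,
        show (xfun n L ℓ (Fin.succ ⟨i, hi⟩) - xfun n L ℓ (Fin.castSucc ⟨i, hi⟩)) =
          (xfun n L ℓ ⟨i+1, by omega⟩ - xfun n L ℓ ⟨i, by omega⟩) from rfl,
        ih (by omega), xfun_incr n L ℓ hn i hi]
    by_cases h0 : i = 0
    · subst h0
      rw [if_pos rfl, pv_zero, show (0+1 : ℕ) = 1 from rfl, pv_one n L ℓ hn]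
      norm_num
    · by_cases h1 : i = 2*n
      · subst h1
        rw [if_neg h0, if_pos rfl, pv_even_eq n L ℓ hn (2*n) (by omega) le_rfl ⟨n, by ring⟩,
            pv_top n L ℓ hn, Even.neg_one_pow (⟨n, by ring⟩ : Even (2*n))]
        ring
      · rcases Nat.even_or_odd i with hp | hp
        · rw [if_neg h0, if_neg h1, pv_even_eq n L ℓ hn i (by omega) (by omega) hp,
              pv_odd_eq n L ℓ hn (i+1) (by omega)
                (by rw [Nat.even_iff] at hp; rw [Nat.odd_iff]; omega),
              Even.neg_one_pow hp]
          ring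
        · rw [if_neg h0, if_neg h1, pv_odd_eq n L ℓ hn i (by omega) hp,
              pv_even_eq n L ℓ hn (i+1) (by omega) (by omega)
                (by rw [Nat.odd_iff] at hp; rw [Nat.even_iff]; omega),
              Odd.neg_one_pow hp]
          ring

include hn in
lemma fp_eq (i : Fin (2*n+2)) :
    foldedPos (2*n) (xfun n L ℓ) i = pv n L ℓ (i:ℕ) := by
  have := fp_val n L ℓ hn (i:ℕ) i.isLt
  rwa [Fin.eta] at this

include hn in
lemma segLo_eq (i : Fin (2*n+1)) :
    segLo (2*n) (xfun n L ℓ) i = min (pv n L ℓ (i:ℕ)) (pv n L ℓ ((i:ℕ)+1)) := by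
  unfold segLo
  rw [fp_eq n L ℓ hn, fp_eq n L ℓ hn, Fin.coe_castSucc, Fin.val_succ]

include hn in
lemma segHi_eq (i : Fin (2*n+1)) :
    segHi (2*n) (xfun n L ℓ) i = max (pv n L ℓ (i:ℕ)) (pv n L ℓ ((i:ℕ)+1)) := by
  unfold segHi
  rw [fp_eq n L ℓ hn, fp_eq n L ℓ hn, Fin.coe_castSucc, Fin.val_succ]

include hn in
lemma creasePt_eq (i : Fin (2*n)) :
    creasePt (2*n) (xfun n L ℓ) i = if Even (i:ℕ) then L else L - ℓ := by
  unfold creasePt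
  rw [fp_eq n L ℓ hn]
  rw [show ((i.succ.castSucc : Fin (2*n+2)) : ℕ) = (i:ℕ)+1 from rfl]
  by_cases hp : Even (i:ℕ)
  · rw [if_pos hp, pv_odd_eq n L ℓ hn _ (by omega)
      (by rw [Nat.even_iff] at hp; rw [Nat.odd_iff]; omega)]
  · rw [if_neg hp, pv_even_eq n L ℓ hn _ (by omega) (by omega)
      (by rw [Nat.even_iff] at hp ⊢; omega)]

include hn in
lemma fp_side (i : Fin (2*n)) :
    foldedPos (2*n) (xfun n L ℓ) i.castSucc.castSucc = pv n L ℓ (i:ℕ) := by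
  rw [fp_eq n L ℓ hn]
  rfl

include hn hl hL in
lemma segLo_le (i : Fin (2*n+1)) : segLo (2*n) (xfun n L ℓ) i ≤ L - ℓ := by
  rw [segLo_eq n L ℓ hn]
  by_cases h0 : (i:ℕ) = 0
  · calc min _ _ ≤ pv n L ℓ (i:ℕ) := min_le_left _ _
    _ ≤ L - ℓ := by rw [h0, pv_zero]; linarith
  · rcases Nat.even_or_odd (i:ℕ) with hp | hp
    · calc min _ _ ≤ pv n L ℓ (i:ℕ) := min_le_left _ _
      _ ≤ L - ℓ := le_of_eq (pv_even_eq n L ℓ hn _ (by omega) (by omega) hp)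
    · calc min _ _ ≤ pv n L ℓ ((i:ℕ)+1) := min_le_right _ _
      _ ≤ L - ℓ := le_of_eq (pv_even_eq n L ℓ hn _ (by omega)
          (by rw [Nat.odd_iff] at hp; omega)
          (by rw [Nat.odd_iff] at hp; rw [Nat.even_iff]; omega))

include hn hl hL in
lemma segHi_ge (i : Fin (2*n+1)) : L ≤ segHi (2*n) (xfun n L ℓ) i := by
  rw [segHi_eq n L ℓ hn]
  rcases Nat.even_or_odd (i:ℕ) with hp | hp
  · by_cases h1 : (i:ℕ) = 2*n
    · calc L ≤ 2*L - ℓ := by linarith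
      _ = pv n L ℓ ((i:ℕ)+1) := by rw [h1, pv_top n L ℓ hn]
      _ ≤ max _ _ := le_max_right _ _
    · calc L = pv n L ℓ ((i:ℕ)+1) := (pv_odd_eq n L ℓ hn _ (by omega)
          (by rw [Nat.even_iff] at hp; rw [Nat.odd_iff]; omega)).symm
      _ ≤ max _ _ := le_max_right _ _
  · calc L = pv n L ℓ (i:ℕ) := (pv_odd_eq n L ℓ hn _ (by omega) hp).symm
    _ ≤ max _ _ := le_max_left _ _

include hn hl hL in
lemma seg_overlap (i j : Fin (2*n+1)) : SegOverlap (2*n) (xfun n L ℓ) i j := by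
  unfold SegOverlap
  have h1 := segLo_le n L ℓ hn hl hL i
  have h2 := segLo_le n L ℓ hn hl hL j
  have h3 := segHi_ge n L ℓ hn hl hL i
  have h4 := segHi_ge n L ℓ hn hl hL j
  have : max (segLo (2*n) (xfun n L ℓ) i) (segLo (2*n) (xfun n L ℓ) j) ≤ L - ℓ :=
    max_le h1 h2
  have : L ≤ min (segHi (2*n) (xfun n L ℓ) i) (segHi (2*n) (xfun n L ℓ) j) :=
    le_min h3 h4
  linarith

include hn hl hL in
lemma segHi_le (j : Fin (2*n+1)) (hj : (j:ℕ) ≠ 2*n) :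
    segHi (2*n) (xfun n L ℓ) j ≤ L := by
  rw [segHi_eq n L ℓ hn]
  exact max_le (pv_le_L n L ℓ hl hL _ (by omega)) (pv_le_L n L ℓ hl hL _ (by omega))

include hn hl hL in
lemma segLo_ge (j : Fin (2*n+1)) (hj : (j:ℕ) ≠ 0) :
    L - ℓ ≤ segLo (2*n) (xfun n L ℓ) j := by
  rw [segLo_eq n L ℓ hn]
  exact le_min (pv_ge n L ℓ hl hL _ (by omega)) (pv_ge n L ℓ hl hL _ (by omega))

end Concrete
end Stmt6Aux



namespace Stmt6Aux

def levSpiral (n : ℕ) : Fin (2*n+1) → ℤ := fun k => -((rho n (k:ℕ) : ℤ))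

lemma levSpiral_def (n : ℕ) (k : Fin (2*n+1)) : levSpiral n k = -((rho n (k:ℕ) : ℤ)) := rfl

section Concrete2
variable (n : ℕ) (L ℓ : ℝ) (hn : 1 ≤ n) (hl : 0 < ℓ) (hL : ℓ < L)

include hn hl hL in
lemma pv_even_lt (k : ℕ) (h1 : k ≤ 2*n) (h2 : Even k) : pv n L ℓ k < L := by
  by_cases h0 : k = 0
  · rw [h0, pv_zero]; linarith
  · rw [pv_even_eq n L ℓ hn k (by omega) h1 h2]; linarith

end Concrete2
end Stmt6Aux



/-- Observation (spiral folding).  For `n ≥ 1`, the strip with `2n` creases, string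
`MⁿVⁿ`, interior segments of equal length `ℓ` and the two end segments of equal
length `L > ℓ`, has a flat folded state, and it is unique up to reversal of the whole
stacking order: every valid leveled folded state induces the stacking order
`S₀, S_{2n-1}, S₂, S_{2n-3}, …, S_{2i}, S_{2(n-i)-1}, …, S₁, S_{2n}` (recorded by the
position function `ρ k = k` for `k` even, `ρ k = 2n − k` for `k` odd) or its
reverse. -/

theorem stmt_6 (n : ℕ) (hn : 1 ≤ n) (L ℓ : ℝ) (hℓ : 0 < ℓ) (hL : ℓ < L) :
    let x : Fin (2 * n + 2) → ℝ := fun i =>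
      if (i : ℕ) = 0 then 0
      else if (i : ℕ) = 2 * n + 1 then 2 * L + (2 * (n : ℝ) - 1) * ℓ
      else L + (((i : ℕ) : ℝ) - 1) * ℓ
    let s : Fin (2 * n) → Bool := fun i => decide (n ≤ (i : ℕ))
    let ρ : Fin (2 * n + 1) → ℕ := fun k =>
      if Even (k : ℕ) then (k : ℕ) else 2 * n - (k : ℕ)
    (∃ lev : Fin (2 * n + 1) → ℤ, ValidLeveled (2 * n) x s lev) ∧
    ∀ lev : Fin (2 * n + 1) → ℤ, ValidLeveled (2 * n) x s lev →
      (∀ i j, lev i < lev j ↔ ρ i < ρ j) ∨ (∀ i j, lev i < lev j ↔ ρ j < ρ i) := by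
  intro x s ρ
  have hx : x = Stmt6Aux.xfun n L ℓ := rfl
  have hρ : ∀ k : Fin (2*n+1), ρ k = Stmt6Aux.rho n (k:ℕ) := fun k => rfl
  constructor
  · -- existence: the spiral leveling
    refine ⟨Stmt6Aux.levSpiral n, ?_, ?_, ?_, ?_⟩
    · -- distinct levels
      intro i j hne _
      have hri := Stmt6Aux.rho_spec n (i:ℕ)
      have hrj := Stmt6Aux.rho_spec n (j:ℕ)
      have hvne : (i:ℕ) ≠ (j:ℕ) := fun hc => hne (Fin.ext hc)
      have hiB : (i:ℕ) < 2*n+1 := i.isLt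
      have hjB : (j:ℕ) < 2*n+1 := j.isLt
      simp only [Stmt6Aux.levSpiral, ne_eq, neg_inj, Nat.cast_inj]
      omega
    · -- crease conditions
      intro i
      rw [show s i = decide (n ≤ (i:ℕ)) from rfl, decide_eq_decide]
      simp only [Stmt6Aux.levSpiral, Fin.coe_castSucc, Fin.val_succ]
      rw [neg_lt_neg_iff, Nat.cast_lt, Nat.even_iff]
      have hri := Stmt6Aux.rho_spec n (i:ℕ)
      have hri1 := Stmt6Aux.rho_spec n ((i:ℕ)+1)
      have hiB : (i:ℕ) < 2*n := i.isLt
      omega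
    · -- no segment strictly between the two sides of a crease at its crease point
      intro i j h1 h2
      rw [hx] at h1 h2
      rw [Stmt6Aux.creasePt_eq n L ℓ hn] at h1 h2
      have hiB : (i:ℕ) < 2*n := i.isLt
      have hjB : (j:ℕ) < 2*n+1 := j.isLt
      simp only [Stmt6Aux.levSpiral, Fin.coe_castSucc, Fin.val_succ]
      have hri := Stmt6Aux.rho_spec n (i:ℕ)
      have hri1 := Stmt6Aux.rho_spec n ((i:ℕ)+1)
      have hrj := Stmt6Aux.rho_spec n (j:ℕ)
      rcases Nat.even_or_odd (i:ℕ) with hp | hp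
      · rw [if_pos hp] at h1 h2
        by_cases hj : (j:ℕ) = 2*n
        · have hpnat := Nat.even_iff.mp hp
          intro ⟨hA, hB⟩
          have c1 := min_choice (-((Stmt6Aux.rho n (i:ℕ) : ℤ))) (-((Stmt6Aux.rho n ((i:ℕ)+1) : ℤ)))
          omega
        · exact absurd h2 (not_lt.mpr (Stmt6Aux.segHi_le n L ℓ hn hℓ hL j hj))
      · rw [if_neg (Nat.not_even_iff_odd.mpr hp)] at h1 h2
        have hpnat := Nat.odd_iff.mp hp
        by_cases hj : (j:ℕ) = 0
        · intro ⟨hA, hB⟩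
          have c1 := max_choice (-((Stmt6Aux.rho n (i:ℕ) : ℤ))) (-((Stmt6Aux.rho n ((i:ℕ)+1) : ℤ)))
          omega
        · exact absurd h1 (not_lt.mpr (Stmt6Aux.segLo_ge n L ℓ hn hℓ hL j hj))
    · -- nesting of creases folded to the same point
      intro i i' hne hcp _hside
      rw [hx, Stmt6Aux.creasePt_eq n L ℓ hn, Stmt6Aux.creasePt_eq n L ℓ hn] at hcp
      have hiB : (i:ℕ) < 2*n := i.isLt
      have hiB' : (i':ℕ) < 2*n := i'.isLt
      have hri := Stmt6Aux.rho_spec n (i:ℕ)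
      have hri1 := Stmt6Aux.rho_spec n ((i:ℕ)+1)
      have hri' := Stmt6Aux.rho_spec n (i':ℕ)
      have hri1' := Stmt6Aux.rho_spec n ((i':ℕ)+1)
      simp only [Stmt6Aux.levSpiral, Fin.coe_castSucc, Fin.val_succ]
      by_cases hp : Even (i:ℕ) <;> by_cases hp' : Even (i':ℕ)
      · apply Stmt6Aux.nod_of_sum_eq
        have hpn := Nat.even_iff.mp hp
        have hpn' := Nat.even_iff.mp hp'
        omega
      · rw [if_pos hp, if_neg hp'] at hcp; exfalso; linarith
      · rw [if_neg hp, if_pos hp'] at hcp; exfalso; linarith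
      · apply Stmt6Aux.nod_of_sum_eq
        have hpn := Nat.even_iff.not.mp hp
        have hpn' := Nat.even_iff.not.mp hp'
        omega
  · -- uniqueness
    intro lev hV
    right
    obtain ⟨hV1, hV2, hV3, hV4⟩ := hV
    have ha : ∀ k, ∀ h : k < 2*n+1,
        (fun m => if hm : m < 2*n+1 then lev ⟨m, hm⟩ else 0) k = lev ⟨k, h⟩ :=
      fun k h => dif_pos h
    set a : ℕ → ℤ := fun m => if hm : m < 2*n+1 then lev ⟨m, hm⟩ else 0 with ha_def
    have hSys : Stmt6Aux.Sys n a := by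
      refine ⟨?_, ?_, ?_, ?_, ?_, ?_⟩
      · -- injectivity
        intro i j hi hj hne
        rw [ha i (by omega), ha j (by omega)]
        refine hV1 ⟨i, by omega⟩ ⟨j, by omega⟩ (Fin.ne_of_val_ne hne) ?_
        rw [hx]
        exact Stmt6Aux.seg_overlap n L ℓ hn hℓ hL _ _
      · -- creases
        intro i hi
        have h2 := hV2 ⟨i, hi⟩
        simp only [Fin.castSucc_mk, Fin.succ_mk] at h2
        rw [show s ⟨i, hi⟩ = decide (n ≤ i) from rfl, decide_eq_decide] at h2
        rw [ha i (by omega), ha (i+1) (by omega)]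
        exact h2
      · -- P-nesting (even creases, all folded at L)
        intro m m' hm hm' hne
        have h4 := hV4 ⟨2*m, by omega⟩ ⟨2*m', by omega⟩
          (Fin.ne_of_val_ne (by show 2*m ≠ 2*m'; omega)) ?_ ?_
        · simp only [Fin.castSucc_mk, Fin.succ_mk] at h4
          rw [ha (2*m) (by omega), ha (2*m+1) (by omega),
              ha (2*m') (by omega), ha (2*m'+1) (by omega)]
          exact h4
        · rw [hx, Stmt6Aux.creasePt_eq n L ℓ hn, Stmt6Aux.creasePt_eq n L ℓ hn,
              if_pos ⟨m, by show 2*m = m + m; omega⟩, if_pos ⟨m', by show 2*m' = m' + m'; omega⟩]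
        · rw [hx, Stmt6Aux.fp_side n L ℓ hn, Stmt6Aux.fp_side n L ℓ hn,
              Stmt6Aux.creasePt_eq n L ℓ hn, Stmt6Aux.creasePt_eq n L ℓ hn,
              if_pos ⟨m, by show 2*m = m + m; omega⟩, if_pos ⟨m', by show 2*m' = m' + m'; omega⟩]
          exact iff_of_true
            (Stmt6Aux.pv_even_lt n L ℓ hn hℓ hL (2*m) (by omega) ⟨m, by omega⟩)
            (Stmt6Aux.pv_even_lt n L ℓ hn hℓ hL (2*m') (by omega) ⟨m', by omega⟩)
      · -- Q-nesting (odd creases, all folded at L - ℓ)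
        intro m m' hm hm' hne
        have hodd : ∀ r : ℕ, ¬ Even (2*r+1) := by
          intro r h; rw [Nat.even_iff] at h; omega
        have h4 := hV4 ⟨2*m+1, by omega⟩ ⟨2*m'+1, by omega⟩
          (Fin.ne_of_val_ne (by show 2*m+1 ≠ 2*m'+1; omega)) ?_ ?_
        · simp only [Fin.castSucc_mk, Fin.succ_mk] at h4
          rw [ha (2*m+1) (by omega), ha (2*m+2) (by omega),
              ha (2*m'+1) (by omega), ha (2*m'+2) (by omega)]
          exact h4
        · rw [hx, Stmt6Aux.creasePt_eq n L ℓ hn, Stmt6Aux.creasePt_eq n L ℓ hn,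
              if_neg (hodd m), if_neg (hodd m')]
        · rw [hx, Stmt6Aux.fp_side n L ℓ hn, Stmt6Aux.fp_side n L ℓ hn,
              Stmt6Aux.creasePt_eq n L ℓ hn, Stmt6Aux.creasePt_eq n L ℓ hn,
              if_neg (hodd m), if_neg (hodd m')]
          have e1 : Stmt6Aux.pv n L ℓ (2*m+1) = L :=
            Stmt6Aux.pv_odd_eq n L ℓ hn _ (by omega) ⟨m, by omega⟩
          have e2 : Stmt6Aux.pv n L ℓ (2*m'+1) = L :=
            Stmt6Aux.pv_odd_eq n L ℓ hn _ (by omega) ⟨m', by omega⟩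
          rw [show ((⟨2*m+1, by omega⟩ : Fin (2*n)) : ℕ) = 2*m+1 from rfl,
              show ((⟨2*m'+1, by omega⟩ : Fin (2*n)) : ℕ) = 2*m'+1 from rfl, e1, e2]
      · -- a 0 protected from odd-crease pairs
        intro m hm
        have h3 := hV3 ⟨2*m+1, by omega⟩ ⟨0, by omega⟩ ?_ ?_
        · simp only [Fin.castSucc_mk, Fin.succ_mk] at h3
          rw [ha (2*m+1) (by omega), ha (2*m+2) (by omega), ha 0 (by omega)]
          exact h3
        · rw [hx, Stmt6Aux.segLo_eq n L ℓ hn, Stmt6Aux.creasePt_eq n L ℓ hn,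
              if_neg (show ¬ Even ((⟨2*m+1, by omega⟩ : Fin (2*n)) : ℕ) by
                show ¬ Even (2*m+1); intro h; rw [Nat.even_iff] at h; omega)]
          calc min (Stmt6Aux.pv n L ℓ ((⟨0, by omega⟩ : Fin (2*n+1)) : ℕ))
                (Stmt6Aux.pv n L ℓ (((⟨0, by omega⟩ : Fin (2*n+1)) : ℕ) + 1))
              ≤ Stmt6Aux.pv n L ℓ 0 := min_le_left _ _
            _ < L - ℓ := by rw [Stmt6Aux.pv_zero]; linarith
        · rw [hx, Stmt6Aux.segHi_eq n L ℓ hn, Stmt6Aux.creasePt_eq n L ℓ hn,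
              if_neg (show ¬ Even ((⟨2*m+1, by omega⟩ : Fin (2*n)) : ℕ) by
                show ¬ Even (2*m+1); intro h; rw [Nat.even_iff] at h; omega)]
          calc L - ℓ < L := by linarith
            _ = Stmt6Aux.pv n L ℓ (((⟨0, by omega⟩ : Fin (2*n+1)) : ℕ) + 1) :=
                (Stmt6Aux.pv_one n L ℓ hn).symm
            _ ≤ _ := le_max_right _ _
      · -- a (2n) protected from even-crease pairs
        intro m hm
        have h3 := hV3 ⟨2*m, by omega⟩ ⟨2*n, by omega⟩ ?_ ?_
        · simp only [Fin.castSucc_mk, Fin.succ_mk] at h3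
          rw [ha (2*m) (by omega), ha (2*m+1) (by omega), ha (2*n) (by omega)]
          exact h3
        · rw [hx, Stmt6Aux.segLo_eq n L ℓ hn, Stmt6Aux.creasePt_eq n L ℓ hn,
              if_pos (show Even ((⟨2*m, by omega⟩ : Fin (2*n)) : ℕ) from ⟨m, by show 2*m = m + m; omega⟩)]
          calc min (Stmt6Aux.pv n L ℓ ((⟨2*n, by omega⟩ : Fin (2*n+1)) : ℕ))
                (Stmt6Aux.pv n L ℓ (((⟨2*n, by omega⟩ : Fin (2*n+1)) : ℕ) + 1))
              ≤ Stmt6Aux.pv n L ℓ (2*n) := min_le_left _ _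
            _ < L := Stmt6Aux.pv_even_lt n L ℓ hn hℓ hL (2*n) le_rfl ⟨n, by omega⟩
        · rw [hx, Stmt6Aux.segHi_eq n L ℓ hn, Stmt6Aux.creasePt_eq n L ℓ hn,
              if_pos (show Even ((⟨2*m, by omega⟩ : Fin (2*n)) : ℕ) from ⟨m, by show 2*m = m + m; omega⟩)]
          calc L < 2*L - ℓ := by linarith
            _ = Stmt6Aux.pv n L ℓ (((⟨2*n, by omega⟩ : Fin (2*n+1)) : ℕ) + 1) :=
                (Stmt6Aux.pv_top n L ℓ hn).symm
            _ ≤ _ := le_max_right _ _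
    intro i j
    have hm := Stmt6Aux.sys_main n a hSys (i:ℕ) (by omega) (j:ℕ) (by omega)
    rw [ha (i:ℕ) i.isLt, ha (j:ℕ) j.isLt] at hm
    rw [Fin.eta, Fin.eta] at hm
    rw [hρ i, hρ j]
    exact hm
end

section
/- Let A = {a_1,…,a_{3m}} be positive integers with Σa_j = mB and B/4 < a_j < B/2, and let m > 6. Suppose the 3m values 2a_j m² are assigned to m bins such that the sum of values in each bin is at most 2Bm² + 12m. Then each bin contains exactly 3 values, the values in each bin sum to exactly 2Bm², and the corresponding partition of A into m triples has each triple summing to exactly B (i.e., it is a valid 3-PARTITION solution). -/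
open Finset

/-- Reverse direction of the reduction's correctness.  Let `a : Fin (3m) → ℕ` be a
3-PARTITION instance with `∑ aⱼ = mB`, `B/4 < aⱼ < B/2`, and `m > 6`.  If the `3m`
values `2aⱼm²` are assigned to `m` bins (via `f`) so that each bin's sum is at most
`2Bm² + 12m`, then each bin contains exactly `3` values, the values in each bin sum to
exactly `2Bm²`, and the corresponding elements of `A` in each bin sum to exactly `B`,
i.e. it is a valid 3-PARTITION solution. -/
theorem stmt_11 (m B : ℕ) (hm : 6 < m) (hB : 0 < B) (a : Fin (3 * m) → ℕ)
    (hpos : ∀ j, 0 < a j)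
    (hsum : ∑ j, a j = m * B)
    (hbounds : ∀ j, B < 4 * a j ∧ 2 * a j < B)
    (f : Fin (3 * m) → Fin m)
    (hbin : ∀ i, ∑ j ∈ univ.filter (fun j => f j = i), 2 * a j * m ^ 2
      ≤ 2 * B * m ^ 2 + 12 * m) :
    ∀ i, (univ.filter (fun j => f j = i)).card = 3 ∧
      (∑ j ∈ univ.filter (fun j => f j = i), 2 * a j * m ^ 2 = 2 * B * m ^ 2) ∧
      (∑ j ∈ univ.filter (fun j => f j = i), a j = B) := by
  set s : Fin m → Finset (Fin (3 * m)) := fun i => univ.filter (fun j => f j = i) with hs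
  have hfiber : ∀ (g : Fin (3 * m) → ℕ), ∑ i, ∑ j ∈ s i, g j = ∑ j, g j := fun g =>
    Finset.sum_fiberwise univ f g
  have hpull : ∀ i, ∑ j ∈ s i, 2 * a j * m ^ 2 = (∑ j ∈ s i, a j) * (2 * m ^ 2) := by
    intro i
    rw [Finset.sum_mul]
    exact Finset.sum_congr rfl (fun j _ => by ring)
  -- each bin's a-sum ≤ B
  have hT : ∀ i, ∑ j ∈ s i, a j ≤ B := by
    intro i
    by_contra h
    push_neg at h
    have h1 := hbin i
    rw [hpull i] at h1
    have h2 : (B + 1) * (2 * m ^ 2) ≤ (∑ j ∈ s i, a j) * (2 * m ^ 2) :=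
      Nat.mul_le_mul_right _ h
    nlinarith
  -- sum of bin sums is m*B
  have hTsum : ∑ i, ∑ j ∈ s i, a j = m * B := by rw [hfiber]; exact hsum
  have hTeq : ∀ i, ∑ j ∈ s i, a j = B := by
    intro i
    by_contra h
    have hlt : ∑ j ∈ s i, a j < B := lt_of_le_of_ne (hT i) h
    have : ∑ i, ∑ j ∈ s i, a j < ∑ _i : Fin m, B :=
      Finset.sum_lt_sum (fun i _ => hT i) ⟨i, Finset.mem_univ i, hlt⟩
    simp [hTsum, mul_comm] at this
  -- cards
  have hcard3 : ∀ i, 3 ≤ (s i).card := by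
    intro i
    by_contra h
    push_neg at h
    have h2 : ∑ j ∈ s i, 2 * a j ≤ ∑ _j ∈ s i, (B - 1) :=
      Finset.sum_le_sum (fun j _ => by have := (hbounds j).2; omega)
    rw [Finset.sum_const, smul_eq_mul] at h2
    have h3 : ∑ j ∈ s i, 2 * a j = 2 * B := by
      rw [← Finset.mul_sum, hTeq i]
    have h4 : (s i).card * (B - 1) ≤ 2 * (B - 1) := Nat.mul_le_mul_right _ (by omega)
    omega
  have hcardsum : ∑ i, (s i).card = 3 * m := by
    have := hfiber (fun _ => 1)
    simpa using this
  have hcardeq : ∀ i, (s i).card = 3 := by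
    intro i
    by_contra h
    have hgt : 3 < (s i).card := lt_of_le_of_ne (hcard3 i) (Ne.symm h)
    have : ∑ _i : Fin m, 3 < ∑ i, (s i).card :=
      Finset.sum_lt_sum (fun i _ => hcard3 i) ⟨i, Finset.mem_univ i, hgt⟩
    simp [hcardsum, mul_comm] at this
  intro i
  refine ⟨hcardeq i, ?_, hTeq i⟩
  rw [show (univ.filter (fun j => f j = i)) = s i from rfl, hpull i, hTeq i]
  ring
end

section
/- The dynamic programming algorithm for minimum-height strip folding is correct: a strip with n creases has a leveled folded state of height at most k if and only if there is a sequence of level assignments a_0, a_1, …, a_{N} (one for each interval between consecutive stopping points of the folded image, where N ≤ 2n+2), each an injective map from the segments overlapping that interval into {1,…,k}, such that every consecutive pair (a_j, a_{j+1}) is locally compatible: (1) segments continuing across the stopping point keep the same level, (2) pairs of segments joined at folds on the same side at the stopping point have nested-or-disjoint level intervals, and (3) no segment crossing the stopping point has its level strictly inside the level interval of a fold there. -/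
open Finset

/-- A (global) leveled folded state of height at most `k`: levels in `{1,…,k}`,
injective on segments whose folded images share an open interval, subject to the
noncrossing conditions at each crease. -/
def GlobalValid (n : ℕ) (x : Fin (n + 2) → ℝ) (k : ℕ) (lev : Fin (n + 1) → Fin k) : Prop :=
  (∀ i j : Fin (n + 1), i ≠ j → SegOverlap n x i j → lev i ≠ lev j) ∧
  (∀ (i : Fin n) (j : Fin (n + 1)), segLo n x j < creasePt n x i →
      creasePt n x i < segHi n x j →
      ¬ (min (lev i.castSucc) (lev i.succ) < lev j ∧
         lev j < max (lev i.castSucc) (lev i.succ))) ∧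
  (∀ i i' : Fin n, i ≠ i' → creasePt n x i = creasePt n x i' →
      ((foldedPos n x i.castSucc.castSucc < creasePt n x i) ↔
        (foldedPos n x i'.castSucc.castSucc < creasePt n x i')) →
      nestedOrDisjoint (lev i.castSucc) (lev i.succ) (lev i'.castSucc) (lev i'.succ))

/-- The stopping points: the distinct x-coordinates of the folded images
`f(p₀), …, f(p_{n+1})` of the crease points and endpoints. -/
noncomputable def stops (n : ℕ) (x : Fin (n + 2) → ℝ) : Finset ℝ :=
  Finset.image (foldedPos n x) univ

/-- `(u, v)` is an interval between two consecutive stopping points. -/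
def Gap (n : ℕ) (x : Fin (n + 2) → ℝ) (u v : ℝ) : Prop :=
  u ∈ stops n x ∧ v ∈ stops n x ∧ u < v ∧ ∀ w ∈ stops n x, ¬ (u < w ∧ w < v)

/-- Segment `i` overlaps the interval between consecutive stopping points `u < v`. -/
def GapOverlap (n : ℕ) (x : Fin (n + 2) → ℝ) (u v : ℝ) (i : Fin (n + 1)) : Prop :=
  segLo n x i ≤ u ∧ v ≤ segHi n x i

/-- The two segments joined at crease `i` extend to the left of its folded point. -/
def ExtLeft (n : ℕ) (x : Fin (n + 2) → ℝ) (i : Fin n) : Prop :=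
  foldedPos n x i.castSucc.castSucc < creasePt n x i

/-- Local data of the dynamic program: for each interval between consecutive stopping
points, a level assignment (a map from the segments overlapping that interval into
`{1,…,k}`, injective there), such that every consecutive pair is locally compatible:
(1) segments continuing across a stopping point keep the same level, (2) pairs of
segments joined at folds on the same side of a stopping point have nested-or-disjoint
level intervals, and (3) no segment crossing a stopping point has its level strictly
inside the level interval of a fold there. -/
def LocalValid (n : ℕ) (x : Fin (n + 2) → ℝ) (k : ℕ)
    (a : ℝ → ℝ → Fin (n + 1) → Fin k) : Prop :=
  -- injectivity on each interval
  (∀ u v, Gap n x u v → ∀ i j : Fin (n + 1), i ≠ j →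
      GapOverlap n x u v i → GapOverlap n x u v j → a u v i ≠ a u v j) ∧
  -- (1) continuation across a stopping point
  (∀ u w v, Gap n x u w → Gap n x w v → ∀ i : Fin (n + 1),
      GapOverlap n x u w i → GapOverlap n x w v i → a u w i = a w v i) ∧
  -- (2) folds on the left side of a stopping point are nested or disjoint
  (∀ u w, Gap n x u w → ∀ i i' : Fin n, i ≠ i' →
      creasePt n x i = w → creasePt n x i' = w → ExtLeft n x i → ExtLeft n x i' →
      nestedOrDisjoint (a u w i.castSucc) (a u w i.succ)
        (a u w i'.castSucc) (a u w i'.succ)) ∧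
  -- (2') folds on the right side of a stopping point are nested or disjoint
  (∀ w v, Gap n x w v → ∀ i i' : Fin n, i ≠ i' →
      creasePt n x i = w → creasePt n x i' = w → ¬ ExtLeft n x i → ¬ ExtLeft n x i' →
      nestedOrDisjoint (a w v i.castSucc) (a w v i.succ)
        (a w v i'.castSucc) (a w v i'.succ)) ∧
  -- (3) no continuing segment lies strictly inside a fold on the left side
  (∀ u w, Gap n x u w → ∀ (i : Fin n) (m : Fin (n + 1)),
      creasePt n x i = w → ExtLeft n x i → segLo n x m < w → w < segHi n x m →
      ¬ (min (a u w i.castSucc) (a u w i.succ) < a u w m ∧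
         a u w m < max (a u w i.castSucc) (a u w i.succ))) ∧
  -- (3') no continuing segment lies strictly inside a fold on the right side
  (∀ w v, Gap n x w v → ∀ (i : Fin n) (m : Fin (n + 1)),
      creasePt n x i = w → ¬ ExtLeft n x i → segLo n x m < w → w < segHi n x m →
      ¬ (min (a w v i.castSucc) (a w v i.succ) < a w v m ∧
         a w v m < max (a w v i.castSucc) (a w v i.succ)))

section AuxStmt15

variable (n : ℕ) (x : Fin (n + 2) → ℝ)

private lemma fd_stmt15 (s : Fin (n + 1)) :
    foldedPos n x s.succ
      = foldedPos n x s.castSucc + (-1 : ℝ) ^ (s : ℕ) * (x s.succ - x s.castSucc) := by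
  unfold foldedPos
  have h : ∀ j : Fin (n + 1),
      (if (j : ℕ) < ((s.succ : Fin (n + 2)) : ℕ) then (-1 : ℝ) ^ (j : ℕ) * (x j.succ - x j.castSucc) else 0)
      = (if (j : ℕ) < ((s.castSucc : Fin (n + 2)) : ℕ) then (-1 : ℝ) ^ (j : ℕ) * (x j.succ - x j.castSucc) else 0)
        + (if j = s then (-1 : ℝ) ^ (s : ℕ) * (x s.succ - x s.castSucc) else 0) := by
    intro j
    simp only [Fin.val_succ, Fin.coe_castSucc]
    rcases lt_trichotomy (j : ℕ) (s : ℕ) with h | h | h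
    · rw [if_pos (by omega), if_pos h, if_neg (by intro e; subst e; omega)]; ring
    · have hj : j = s := Fin.ext h
      subst hj
      rw [if_pos (by omega), if_neg (by omega), if_pos rfl]; ring
    · rw [if_neg (by omega), if_neg (by omega), if_neg (by intro e; subst e; omega)]; ring
  rw [Finset.sum_congr rfl (fun j _ => h j), Finset.sum_add_distrib,
    Finset.sum_ite_eq' univ s]
  simp

private lemma segLo_mem_stmt15 (s : Fin (n + 1)) : segLo n x s ∈ stops n x := by
  unfold segLo stops
  rcases min_cases (foldedPos n x s.castSucc) (foldedPos n x s.succ) with h | h <;>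
    rw [h.1] <;> exact Finset.mem_image_of_mem _ (Finset.mem_univ _)

private lemma segHi_mem_stmt15 (s : Fin (n + 1)) : segHi n x s ∈ stops n x := by
  unfold segHi stops
  rcases max_cases (foldedPos n x s.castSucc) (foldedPos n x s.succ) with h | h <;>
    rw [h.1] <;> exact Finset.mem_image_of_mem _ (Finset.mem_univ _)

private lemma segLo_lt_segHi_stmt15 (hx : StrictMono x) (s : Fin (n + 1)) :
    segLo n x s < segHi n x s := by
  have hΔ : 0 < x s.succ - x s.castSucc := sub_pos.mpr (hx Fin.castSucc_lt_succ)
  have hne : foldedPos n x s.castSucc ≠ foldedPos n x s.succ := by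
    have := fd_stmt15 n x s
    intro he
    rw [← he] at this
    have : (-1 : ℝ) ^ (s : ℕ) * (x s.succ - x s.castSucc) = 0 := by linarith
    rcases mul_eq_zero.mp this with h | h
    · exact pow_ne_zero _ (by norm_num) h
    · linarith
  exact min_lt_max.mpr hne

private lemma extLeft_sides_stmt15 (hx : StrictMono x) (i : Fin n) (h : ExtLeft n x i) :
    segHi n x i.castSucc = creasePt n x i ∧ segHi n x i.succ = creasePt n x i ∧
    segLo n x i.castSucc < creasePt n x i ∧ segLo n x i.succ < creasePt n x i := by
  have hΔ1 : 0 < x (i.castSucc : Fin (n+1)).succ - x (i.castSucc : Fin (n+1)).castSucc :=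
    sub_pos.mpr (hx Fin.castSucc_lt_succ)
  have hΔ2 : 0 < x (i.succ : Fin (n+1)).succ - x (i.succ : Fin (n+1)).castSucc :=
    sub_pos.mpr (hx Fin.castSucc_lt_succ)
  have h1 := fd_stmt15 n x i.castSucc
  have h2 := fd_stmt15 n x i.succ
  rw [Fin.succ_castSucc] at h1 hΔ1
  have hcw : creasePt n x i = foldedPos n x i.succ.castSucc := rfl
  have hE : foldedPos n x i.castSucc.castSucc < foldedPos n x i.succ.castSucc := h
  have hcoe1 : ((i.castSucc : Fin (n+1)) : ℕ) = (i : ℕ) := rfl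
  have hcoe2 : ((i.succ : Fin (n+1)) : ℕ) = (i : ℕ) + 1 := rfl
  rw [hcoe1] at h1
  rw [hcoe2, pow_succ] at h2
  rcases Nat.even_or_odd (i : ℕ) with he | ho
  · have hp : (-1 : ℝ) ^ (i : ℕ) = 1 := he.neg_one_pow
    rw [hp] at h1 h2
    have hB : foldedPos n x i.succ.succ < foldedPos n x i.succ.castSucc := by
      rw [h2]; nlinarith
    refine ⟨?_, ?_, ?_, ?_⟩
    · unfold segHi; rw [Fin.succ_castSucc, hcw]; exact max_eq_right (le_of_lt hE)
    · unfold segHi; rw [hcw]; exact max_eq_left (le_of_lt hB)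
    · unfold segLo; rw [Fin.succ_castSucc, hcw]
      calc min (foldedPos n x i.castSucc.castSucc) (foldedPos n x i.succ.castSucc)
          ≤ foldedPos n x i.castSucc.castSucc := min_le_left _ _
        _ < _ := hE
    · unfold segLo; rw [hcw]
      calc min (foldedPos n x i.succ.castSucc) (foldedPos n x i.succ.succ)
          ≤ foldedPos n x i.succ.succ := min_le_right _ _
        _ < _ := hB
  · exfalso
    have hp : (-1 : ℝ) ^ (i : ℕ) = -1 := ho.neg_one_pow
    rw [hp] at h1
    nlinarith [hE]

private lemma notExtLeft_sides_stmt15 (hx : StrictMono x) (i : Fin n) (h : ¬ ExtLeft n x i) :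
    segLo n x i.castSucc = creasePt n x i ∧ segLo n x i.succ = creasePt n x i ∧
    creasePt n x i < segHi n x i.castSucc ∧ creasePt n x i < segHi n x i.succ := by
  have hΔ1 : 0 < x (i.castSucc : Fin (n+1)).succ - x (i.castSucc : Fin (n+1)).castSucc :=
    sub_pos.mpr (hx Fin.castSucc_lt_succ)
  have hΔ2 : 0 < x (i.succ : Fin (n+1)).succ - x (i.succ : Fin (n+1)).castSucc :=
    sub_pos.mpr (hx Fin.castSucc_lt_succ)
  have h1 := fd_stmt15 n x i.castSucc
  have h2 := fd_stmt15 n x i.succ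
  rw [Fin.succ_castSucc] at h1 hΔ1
  have hcw : creasePt n x i = foldedPos n x i.succ.castSucc := rfl
  have hE : ¬ foldedPos n x i.castSucc.castSucc < foldedPos n x i.succ.castSucc := h
  have hcoe1 : ((i.castSucc : Fin (n+1)) : ℕ) = (i : ℕ) := rfl
  have hcoe2 : ((i.succ : Fin (n+1)) : ℕ) = (i : ℕ) + 1 := rfl
  rw [hcoe1] at h1
  rw [hcoe2, pow_succ] at h2
  rcases Nat.even_or_odd (i : ℕ) with he | ho
  · exfalso
    have hp : (-1 : ℝ) ^ (i : ℕ) = 1 := he.neg_one_pow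
    rw [hp] at h1
    exact hE (by linarith)
  · have hp : (-1 : ℝ) ^ (i : ℕ) = -1 := ho.neg_one_pow
    rw [hp] at h1 h2
    have hA : foldedPos n x i.succ.castSucc < foldedPos n x i.castSucc.castSucc := by
      rw [h1]; linarith
    have hB : foldedPos n x i.succ.castSucc < foldedPos n x i.succ.succ := by
      rw [h2]; nlinarith
    refine ⟨?_, ?_, ?_, ?_⟩
    · unfold segLo; rw [Fin.succ_castSucc, hcw]; exact min_eq_right (le_of_lt hA)
    · unfold segLo; rw [hcw]; exact min_eq_left (le_of_lt hB)
    · unfold segHi; rw [Fin.succ_castSucc, hcw]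
      calc foldedPos n x i.succ.castSucc < foldedPos n x i.castSucc.castSucc := hA
        _ ≤ _ := le_max_left _ _
    · unfold segHi; rw [hcw]
      calc foldedPos n x i.succ.castSucc < foldedPos n x i.succ.succ := hB
        _ ≤ _ := le_max_right _ _

private lemma gap_unique_stmt15 {u v v' : ℝ} (h : Gap n x u v) (h' : Gap n x u v') : v = v' := by
  rcases lt_trichotomy v v' with hlt | he | hlt
  · exact absurd ⟨h.2.2.1, hlt⟩ (h'.2.2.2 v h.2.1)
  · exact he
  · exact absurd ⟨h'.2.2.1, hlt⟩ (h.2.2.2 v' h'.2.1)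

noncomputable def nxt_stmt15 (u : ℝ) : ℝ :=
  if h : ((stops n x).filter (fun t => u < t)).Nonempty
  then ((stops n x).filter (fun t => u < t)).min' h else u

noncomputable def prv_stmt15 (w : ℝ) : ℝ :=
  if h : ((stops n x).filter (fun t => t < w)).Nonempty
  then ((stops n x).filter (fun t => t < w)).max' h else w

private lemma nxt_spec_stmt15 {u t : ℝ} (hu : u ∈ stops n x) (ht : t ∈ stops n x)
    (hut : u < t) : Gap n x u (nxt_stmt15 n x u) ∧ nxt_stmt15 n x u ≤ t := by
  have hne : ((stops n x).filter (fun s => u < s)).Nonempty :=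
    ⟨t, Finset.mem_filter.mpr ⟨ht, hut⟩⟩
  have hval : nxt_stmt15 n x u = ((stops n x).filter (fun s => u < s)).min' hne := by
    unfold nxt_stmt15; rw [dif_pos hne]
  have hmem := Finset.min'_mem _ hne
  rw [← hval] at hmem
  rw [Finset.mem_filter] at hmem
  refine ⟨⟨hu, hmem.1, hmem.2, ?_⟩, ?_⟩
  · intro w hw hww
    have : nxt_stmt15 n x u ≤ w := by
      rw [hval]; exact Finset.min'_le _ _ (Finset.mem_filter.mpr ⟨hw, hww.1⟩)
    exact absurd hww.2 (not_lt.mpr this)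
  · rw [hval]; exact Finset.min'_le _ _ (Finset.mem_filter.mpr ⟨ht, hut⟩)

private lemma prv_spec_stmt15 {w s : ℝ} (hw : w ∈ stops n x) (hs : s ∈ stops n x)
    (hsw : s < w) : Gap n x (prv_stmt15 n x w) w ∧ s ≤ prv_stmt15 n x w := by
  have hne : ((stops n x).filter (fun t => t < w)).Nonempty :=
    ⟨s, Finset.mem_filter.mpr ⟨hs, hsw⟩⟩
  have hval : prv_stmt15 n x w = ((stops n x).filter (fun t => t < w)).max' hne := by
    unfold prv_stmt15; rw [dif_pos hne]
  have hmem := Finset.max'_mem _ hne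
  rw [← hval] at hmem
  rw [Finset.mem_filter] at hmem
  refine ⟨⟨hmem.1, hw, hmem.2, ?_⟩, ?_⟩
  · intro t ht htt
    have h9 : t ∈ (stops n x).filter (fun r => r < w) := Finset.mem_filter.mpr ⟨ht, htt.2⟩
    have : t ≤ prv_stmt15 n x w := by
      rw [hval]; exact Finset.le_max' _ t h9
    exact absurd htt.1 (not_lt.mpr this)
  · have h9 : s ∈ (stops n x).filter (fun r => r < w) := Finset.mem_filter.mpr ⟨hs, hsw⟩
    rw [hval]; exact Finset.le_max' _ s h9

private lemma const_aux_stmt15 (hx : StrictMono x) {k : ℕ} (a : ℝ → ℝ → Fin (n + 1) → Fin k)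
    (hcont : ∀ u w v, Gap n x u w → Gap n x w v → ∀ i : Fin (n + 1),
      GapOverlap n x u w i → GapOverlap n x w v i → a u w i = a w v i)
    (i : Fin (n + 1)) :
    ∀ m u v, ((stops n x).filter (fun t => t < u)).card ≤ m → Gap n x u v →
      GapOverlap n x u v i →
      a u v i = a (segLo n x i) (nxt_stmt15 n x (segLo n x i)) i := by
  have hlo := segLo_lt_segHi_stmt15 n x hx i
  have hg0 := (nxt_spec_stmt15 n x (segLo_mem_stmt15 n x i) (segHi_mem_stmt15 n x i) hlo).1
  intro m
  induction m with
  | zero =>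
    intro u v hc hg ho
    have heu : segLo n x i = u := by
      rcases eq_or_lt_of_le ho.1 with he | hlt
      · exact he
      · exfalso
        have : segLo n x i ∈ (stops n x).filter (fun t => t < u) :=
          Finset.mem_filter.mpr ⟨segLo_mem_stmt15 n x i, hlt⟩
        have := Finset.card_pos.mpr ⟨_, this⟩
        omega
    subst heu
    rw [gap_unique_stmt15 n x hg hg0]
  | succ m ih =>
    intro u v hc hg ho
    rcases eq_or_lt_of_le ho.1 with he | hlt
    · subst he
      rw [gap_unique_stmt15 n x hg hg0]
    · have hp := prv_spec_stmt15 n x hg.1 (segLo_mem_stmt15 n x i) hlt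
      set u1 := prv_stmt15 n x u with hu1
      have ho1 : GapOverlap n x u1 u i := ⟨hp.2, le_trans (le_of_lt hg.2.2.1) ho.2⟩
      have hcard : ((stops n x).filter (fun t => t < u1)).card ≤ m := by
        have hsub : (stops n x).filter (fun t => t < u1) ⊆ (stops n x).filter (fun t => t < u) := by
          intro t ht
          rw [Finset.mem_filter] at ht ⊢
          exact ⟨ht.1, lt_trans ht.2 hp.1.2.2.1⟩
        have hss : (stops n x).filter (fun t => t < u1) ⊂ (stops n x).filter (fun t => t < u) := by
          refine (Finset.ssubset_iff_of_subset hsub).mpr ⟨u1, ?_, ?_⟩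
          · exact Finset.mem_filter.mpr ⟨hp.1.1, hp.1.2.2.1⟩
          · intro hmem
            exact absurd (Finset.mem_filter.mp hmem).2 (lt_irrefl u1)
        have := Finset.card_lt_card hss
        omega
      rw [← hcont u1 u v hp.1 hg i ho1 ho]
      exact ih u1 u hcard hp.1 ho1

end AuxStmt15

/-- Correctness of the dynamic programming algorithm for minimum-height strip folding:
a strip with `n` creases has a leveled folded state of height at most `k` if and only
if there is a family of level assignments, one for each interval between consecutive
stopping points of the folded image, injective on the segments overlapping each
interval, with every consecutive pair locally compatible (conditions (1)–(3)). -/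
theorem stmt_15 (n : ℕ) (x : Fin (n + 2) → ℝ) (hx : StrictMono x) (k : ℕ) :
    (∃ lev : Fin (n + 1) → Fin k, GlobalValid n x k lev) ↔
    (∃ a : ℝ → ℝ → Fin (n + 1) → Fin k, LocalValid n x k a) := by
  constructor
  · rintro ⟨lev, hG⟩
    refine ⟨fun _ _ i => lev i, ?_, ?_, ?_, ?_, ?_, ?_⟩
    · intro u v hg i j hne hoi hoj
      apply hG.1 i j hne
      unfold SegOverlap
      calc max (segLo n x i) (segLo n x j) ≤ u := max_le hoi.1 hoj.1
        _ < v := hg.2.2.1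
        _ ≤ min (segHi n x i) (segHi n x j) := le_min hoi.2 hoj.2
    · intro _ _ _ _ _ _ _ _; rfl
    · intro u w hg i i' hne hci hci' hE hE'
      exact hG.2.2 i i' hne (hci.trans hci'.symm) (iff_of_true hE hE')
    · intro w v hg i i' hne hci hci' hE hE'
      exact hG.2.2 i i' hne (hci.trans hci'.symm) (iff_of_false hE hE')
    · intro u w hg i m hci _ hlo hhi
      exact hG.2.1 i m (by rw [hci]; exact hlo) (by rw [hci]; exact hhi)
    · intro w v hg i m hci _ hlo hhi
      exact hG.2.1 i m (by rw [hci]; exact hlo) (by rw [hci]; exact hhi)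
  · rintro ⟨a, hinj, hcont, hL2, hR2, hL3, hR3⟩
    set lev : Fin (n + 1) → Fin k :=
      fun i => a (segLo n x i) (nxt_stmt15 n x (segLo n x i)) i with hlev
    have key : ∀ u v (i : Fin (n + 1)), Gap n x u v → GapOverlap n x u v i →
        a u v i = lev i := by
      intro u v i hg ho
      exact const_aux_stmt15 n x hx a hcont i _ u v le_rfl hg ho
    refine ⟨lev, ?_, ?_, ?_⟩
    · intro i j hne hov
      set u := max (segLo n x i) (segLo n x j) with hu
      have humem : u ∈ stops n x := by
        rcases max_cases (segLo n x i) (segLo n x j) with h | h <;> rw [hu, h.1]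
        exacts [segLo_mem_stmt15 n x i, segLo_mem_stmt15 n x j]
      have htmem : min (segHi n x i) (segHi n x j) ∈ stops n x := by
        rcases min_cases (segHi n x i) (segHi n x j) with h | h <;> rw [h.1]
        exacts [segHi_mem_stmt15 n x i, segHi_mem_stmt15 n x j]
      have hns := nxt_spec_stmt15 n x humem htmem hov
      have hoi : GapOverlap n x u (nxt_stmt15 n x u) i :=
        ⟨le_max_left _ _, hns.2.trans (min_le_left _ _)⟩
      have hoj : GapOverlap n x u (nxt_stmt15 n x u) j :=
        ⟨le_max_right _ _, hns.2.trans (min_le_right _ _)⟩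
      have hmain := hinj u (nxt_stmt15 n x u) hns.1 i j hne hoi hoj
      rwa [key _ _ i hns.1 hoi, key _ _ j hns.1 hoj] at hmain
    · intro i j hlo hhi
      set w := creasePt n x i with hw
      have hwmem : w ∈ stops n x := by
        rw [hw]; exact Finset.mem_image_of_mem _ (Finset.mem_univ _)
      by_cases hE : ExtLeft n x i
      · obtain ⟨hs1, hs2, hl1, hl2⟩ := extLeft_sides_stmt15 n x hx i hE
        rw [← hw] at hs1 hs2 hl1 hl2
        have hp := prv_spec_stmt15 n x hwmem (segLo_mem_stmt15 n x j) hlo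
        set u := prv_stmt15 n x w with hu
        have hq1 := (prv_spec_stmt15 n x hwmem (segLo_mem_stmt15 n x i.castSucc) hl1).2
        have hq2 := (prv_spec_stmt15 n x hwmem (segLo_mem_stmt15 n x i.succ) hl2).2
        have hoj : GapOverlap n x u w j := ⟨hp.2, le_of_lt hhi⟩
        have ho1 : GapOverlap n x u w i.castSucc := ⟨hq1, le_of_eq hs1.symm⟩
        have ho2 : GapOverlap n x u w i.succ := ⟨hq2, le_of_eq hs2.symm⟩
        have hmain := hL3 u w hp.1 i j hw.symm hE hlo hhi
        rwa [key _ _ _ hp.1 ho1, key _ _ _ hp.1 ho2, key _ _ _ hp.1 hoj] at hmain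
      · obtain ⟨hs1, hs2, hh1, hh2⟩ := notExtLeft_sides_stmt15 n x hx i hE
        rw [← hw] at hs1 hs2 hh1 hh2
        have hn := nxt_spec_stmt15 n x hwmem (segHi_mem_stmt15 n x j) hhi
        set v := nxt_stmt15 n x w with hv
        have hq1 := (nxt_spec_stmt15 n x hwmem (segHi_mem_stmt15 n x i.castSucc) hh1).2
        have hq2 := (nxt_spec_stmt15 n x hwmem (segHi_mem_stmt15 n x i.succ) hh2).2
        have hoj : GapOverlap n x w v j := ⟨le_of_lt hlo, hn.2⟩
        have ho1 : GapOverlap n x w v i.castSucc := ⟨le_of_eq hs1, hq1⟩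
        have ho2 : GapOverlap n x w v i.succ := ⟨le_of_eq hs2, hq2⟩
        have hmain := hR3 w v hn.1 i j hw.symm hE hlo hhi
        rwa [key _ _ _ hn.1 ho1, key _ _ _ hn.1 ho2, key _ _ _ hn.1 hoj] at hmain
    · intro i i' hne hcc hiff
      set w := creasePt n x i with hw
      have hwmem : w ∈ stops n x := by
        rw [hw]; exact Finset.mem_image_of_mem _ (Finset.mem_univ _)
      by_cases hE : ExtLeft n x i
      · have hE' : ExtLeft n x i' := hiff.mp hE
        obtain ⟨hs1, hs2, hl1, hl2⟩ := extLeft_sides_stmt15 n x hx i hE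
        obtain ⟨hs1', hs2', hl1', hl2'⟩ := extLeft_sides_stmt15 n x hx i' hE'
        rw [← hcc] at hs1' hs2' hl1' hl2'
        rw [← hw] at hs1 hs2 hl1 hl2
        have hp := prv_spec_stmt15 n x hwmem (segLo_mem_stmt15 n x i.castSucc) hl1
        set u := prv_stmt15 n x w with hu
        have hq2 := (prv_spec_stmt15 n x hwmem (segLo_mem_stmt15 n x i.succ) hl2).2
        have hq1' := (prv_spec_stmt15 n x hwmem (segLo_mem_stmt15 n x i'.castSucc) hl1').2
        have hq2' := (prv_spec_stmt15 n x hwmem (segLo_mem_stmt15 n x i'.succ) hl2').2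
        have ho1 : GapOverlap n x u w i.castSucc := ⟨hp.2, le_of_eq hs1.symm⟩
        have ho2 : GapOverlap n x u w i.succ := ⟨hq2, le_of_eq hs2.symm⟩
        have ho1' : GapOverlap n x u w i'.castSucc := ⟨hq1', le_of_eq hs1'.symm⟩
        have ho2' : GapOverlap n x u w i'.succ := ⟨hq2', le_of_eq hs2'.symm⟩
        have hmain := hL2 u w hp.1 i i' hne hw.symm hcc.symm hE hE'
        rwa [key _ _ _ hp.1 ho1, key _ _ _ hp.1 ho2, key _ _ _ hp.1 ho1',
          key _ _ _ hp.1 ho2'] at hmain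
      · have hE' : ¬ ExtLeft n x i' := fun h => hE (hiff.mpr h)
        obtain ⟨hs1, hs2, hh1, hh2⟩ := notExtLeft_sides_stmt15 n x hx i hE
        obtain ⟨hs1', hs2', hh1', hh2'⟩ := notExtLeft_sides_stmt15 n x hx i' hE'
        rw [← hcc] at hs1' hs2' hh1' hh2'
        rw [← hw] at hs1 hs2 hh1 hh2
        have hn := nxt_spec_stmt15 n x hwmem (segHi_mem_stmt15 n x i.castSucc) hh1
        set v := nxt_stmt15 n x w with hv
        have hq2 := (nxt_spec_stmt15 n x hwmem (segHi_mem_stmt15 n x i.succ) hh2).2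
        have hq1' := (nxt_spec_stmt15 n x hwmem (segHi_mem_stmt15 n x i'.castSucc) hh1').2
        have hq2' := (nxt_spec_stmt15 n x hwmem (segHi_mem_stmt15 n x i'.succ) hh2').2
        have ho1 : GapOverlap n x w v i.castSucc := ⟨le_of_eq hs1, hn.2⟩
        have ho2 : GapOverlap n x w v i.succ := ⟨le_of_eq hs2, hq2⟩
        have ho1' : GapOverlap n x w v i'.castSucc := ⟨le_of_eq hs1', hq1'⟩
        have ho2' : GapOverlap n x w v i'.succ := ⟨le_of_eq hs2', hq2'⟩
        have hmain := hR2 w v hn.1 i i' hne hw.symm hcc.symm hE hE'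
        rwa [key _ _ _ hn.1 ho1, key _ _ _ hn.1 ho2, key _ _ _ hn.1 ho1',
          key _ _ _ hn.1 ho2'] at hmain
end
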